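/- For real symmetric positive definite n×n matrices A, B, the set {U ∈ ℝ^{n×n} : [[B,Uᵀ],[U,I]] ⪰ 0} contains an element of the form U = W where W ∈ O(n) scaled appropriately attains Tr(√A·U) = Tr(√(√A B √A)); moreover for all feasible U, Tr(√A·U) ≤ Tr(√(√A B √A)). -/

import Mathlib

open Matrix BigOperators

open Classical in
noncomputable def msqrt {n : ℕ} (M : Matrix (Fin n) (Fin n) ℝ) : Matrix (Fin n) (Fin n) ℝ :=
  if h : M.PosSemidef then
    h.1.eigenvectorUnitary.1 * diagonal (Real.sqrt ∘ h.1.eigenvalues) *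
      (star h.1.eigenvectorUnitary : Matrix (Fin n) (Fin n) ℝ)
  else 0

noncomputable def fnorm {n : ℕ} (A : Matrix (Fin n) (Fin n) ℝ) : ℝ :=
  Real.sqrt (∑ i, ∑ j, (A i j) ^ 2)

open scoped MatrixOrder in
private lemma msqrt_eq_cfc_sqrt {n : ℕ} {M : Matrix (Fin n) (Fin n) ℝ} (h : M.PosSemidef) :
    msqrt M = CFC.sqrt M := by
  rw [msqrt, dif_pos h, CFC.sqrt_eq_real_sqrt M (nonneg_iff_posSemidef.mpr h), cfcₙ_eq_cfc, h.1.cfc_eq]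
  simp [IsHermitian.cfc, RCLike.ofReal_real_eq_id, Matrix.mul_assoc]

noncomputable def Matrix.PosSemidef.sqrt {n : ℕ} {M : Matrix (Fin n) (Fin n) ℝ}
    (_h : M.PosSemidef) : Matrix (Fin n) (Fin n) ℝ := msqrt M

open scoped MatrixOrder in
lemma Matrix.PosSemidef.posSemidef_sqrt {n : ℕ} {M : Matrix (Fin n) (Fin n) ℝ}
    (h : M.PosSemidef) : h.sqrt.PosSemidef := by
  rw [Matrix.PosSemidef.sqrt, msqrt_eq_cfc_sqrt h, ← nonneg_iff_posSemidef]
  exact CFC.sqrt_nonneg M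

open scoped MatrixOrder in
lemma Matrix.PosSemidef.sqrt_mul_self {n : ℕ} {M : Matrix (Fin n) (Fin n) ℝ}
    (h : M.PosSemidef) : h.sqrt * h.sqrt = M := by
  rw [Matrix.PosSemidef.sqrt, msqrt_eq_cfc_sqrt h]
  exact CFC.sqrt_mul_sqrt_self M (nonneg_iff_posSemidef.mpr h)

open scoped MatrixOrder in
lemma Matrix.PosSemidef.eq_sqrt_of_sq_eq {n : ℕ} {A B : Matrix (Fin n) (Fin n) ℝ}
    (hB : B.PosSemidef) (hA : A.PosSemidef) (h : B ^ 2 = A) : B = hA.sqrt := by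
  rw [Matrix.PosSemidef.sqrt, msqrt_eq_cfc_sqrt hA]
  exact (CFC.sqrt_unique (by rw [← pow_two]; exact h) (nonneg_iff_posSemidef.mpr hB)).symm

open scoped MatrixOrder in
lemma Matrix.posSemidef_iff_eq_transpose_mul_self {n : ℕ} {X : Matrix (Fin n) (Fin n) ℝ} :
    X.PosSemidef ↔ ∃ Z : Matrix (Fin n) (Fin n) ℝ, X = Zᴴ * Z := by
  refine ⟨fun h => ?_, fun ⟨Z, hZ⟩ => hZ ▸ Matrix.posSemidef_conjTranspose_mul_self Z⟩
  obtain ⟨y, hy⟩ := CStarAlgebra.nonneg_iff_eq_star_mul_self.mp (nonneg_iff_posSemidef.mpr h)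
  exact ⟨y, hy⟩

private lemma psd_trace_mul_nonneg {n : ℕ} {X Y : Matrix (Fin n) (Fin n) ℝ}
    (hX : X.PosSemidef) (hY : Y.PosSemidef) : 0 ≤ (X * Y).trace := by
  obtain ⟨Z, rfl⟩ := Matrix.posSemidef_iff_eq_transpose_mul_self.mp hX
  obtain ⟨V, rfl⟩ := Matrix.posSemidef_iff_eq_transpose_mul_self.mp hY
  have h1 : (Zᴴ * Z * (Vᴴ * V)).trace = ((Z * Vᴴ) * (Z * Vᴴ)ᴴ).trace := by
    rw [Matrix.mul_assoc, Matrix.trace_mul_comm, Matrix.conjTranspose_mul,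
      Matrix.conjTranspose_conjTranspose]
    congr 1
    simp only [Matrix.mul_assoc]
  rw [h1, Matrix.conjTranspose_eq_transpose_of_trivial]
  refine Finset.sum_nonneg fun i _ => ?_
  simp only [Matrix.diag_apply, Matrix.mul_apply, Matrix.transpose_apply]
  exact Finset.sum_nonneg fun j _ => mul_self_nonneg _

private lemma psd_trace_nonneg {n : ℕ} {X : Matrix (Fin n) (Fin n) ℝ}
    (hX : X.PosSemidef) : 0 ≤ X.trace := by
  have := psd_trace_mul_nonneg hX (Matrix.PosDef.one (n := Fin n) (R := ℝ)).posSemidef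
  simpa using this

private lemma psd_posDef_of_isUnit {n : ℕ} {S : Matrix (Fin n) (Fin n) ℝ}
    (hS : S.PosSemidef) (h : IsUnit S.det) : S.PosDef := by
  exact hS.posDef_iff_isUnit.mpr ((Matrix.isUnit_iff_isUnit_det S).mpr h)

theorem stmt_11 {n : ℕ} (A B : Matrix (Fin n) (Fin n) ℝ)
    (hA : A.PosDef) (hB : B.PosDef) :
    (∃ U : Matrix (Fin n) (Fin n) ℝ, (Matrix.fromBlocks B Uᵀ U 1).PosSemidef ∧
        (msqrt A * U).trace = (msqrt (msqrt A * B * msqrt A)).trace) ∧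
    ∀ U : Matrix (Fin n) (Fin n) ℝ, (Matrix.fromBlocks B Uᵀ U 1).PosSemidef →
      (msqrt A * U).trace ≤ (msqrt (msqrt A * B * msqrt A)).trace := by
  classical
  have hA' := hA.posSemidef
  have hB' := hB.posSemidef
  set S := hA'.sqrt with hSdef
  set T := hB'.sqrt with hTdef
  have hS : S.PosSemidef := hA'.posSemidef_sqrt
  have hT : T.PosSemidef := hB'.posSemidef_sqrt
  have hSt : Sᵀ = S := by
    rw [← Matrix.conjTranspose_eq_transpose_of_trivial]; exact hS.1
  have hTt : Tᵀ = T := by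
    rw [← Matrix.conjTranspose_eq_transpose_of_trivial]; exact hT.1
  have hS2 : S * S = A := hA'.sqrt_mul_self
  have hT2 : T * T = B := hB'.sqrt_mul_self
  have hSu : IsUnit S.det := by
    have hdet : S.det * S.det = A.det := by rw [← Matrix.det_mul, hS2]
    exact isUnit_of_mul_isUnit_left (y := S.det) (hdet ▸ hA.det_pos.ne'.isUnit)
  have hTu : IsUnit T.det := by
    have hdet : T.det * T.det = B.det := by rw [← Matrix.det_mul, hT2]
    exact isUnit_of_mul_isUnit_left (y := T.det) (hdet ▸ hB.det_pos.ne'.isUnit)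
  -- msqrt A = S
  have hmA : msqrt A = S := by
    rfl
  -- S * B * S is PSD
  have hSBS : (S * B * S).PosSemidef := by
    have h := hB'.mul_mul_conjTranspose_same S
    rwa [Matrix.conjTranspose_eq_transpose_of_trivial, hSt] at h
  set C := hSBS.sqrt with hCdef
  have hC : C.PosSemidef := hSBS.posSemidef_sqrt
  have hC2 : C * C = S * B * S := hSBS.sqrt_mul_self
  have hCt : Cᵀ = C := by
    rw [← Matrix.conjTranspose_eq_transpose_of_trivial]; exact hC.1
  have hCu : IsUnit C.det := by
    have hdet : C.det * C.det = S.det * B.det * S.det := by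
      rw [← Matrix.det_mul, hC2, Matrix.det_mul, Matrix.det_mul]
    exact isUnit_of_mul_isUnit_left (y := C.det)
      (hdet ▸ ((hSu.mul hB.det_pos.ne'.isUnit).mul hSu))
  have hCd : C.PosDef := psd_posDef_of_isUnit hC hCu
  -- msqrt (S * B * S) = C
  have hmC : msqrt (S * B * S) = C := by
    rfl
  -- T * A * T is PSD, P its sqrt
  have hTAT : (T * A * T).PosSemidef := by
    have h := hA'.mul_mul_conjTranspose_same T
    rwa [Matrix.conjTranspose_eq_transpose_of_trivial, hTt] at h
  set P := hTAT.sqrt with hPdef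
  have hP : P.PosSemidef := hTAT.posSemidef_sqrt
  have hP2 : P * P = T * A * T := hTAT.sqrt_mul_self
  have hPt : Pᵀ = P := by
    rw [← Matrix.conjTranspose_eq_transpose_of_trivial]; exact hP.1
  have hPu : IsUnit P.det := by
    have hdet : P.det * P.det = T.det * A.det * T.det := by
      rw [← Matrix.det_mul, hP2, Matrix.det_mul, Matrix.det_mul]
    exact isUnit_of_mul_isUnit_left (y := P.det)
      (hdet ▸ ((hTu.mul hA.det_pos.ne'.isUnit).mul hTu))
  have hPinvT : (P⁻¹)ᵀ = P⁻¹ := by rw [Matrix.transpose_nonsing_inv, hPt]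
  -- rewriting helpers
  have e1 : ∀ X : Matrix (Fin n) (Fin n) ℝ, S * (S * X) = A * X := fun X => by
    rw [← Matrix.mul_assoc, hS2]
  have e2 : ∀ X : Matrix (Fin n) (Fin n) ℝ, T * (T * X) = B * X := fun X => by
    rw [← Matrix.mul_assoc, hT2]
  have e3 : ∀ X : Matrix (Fin n) (Fin n) ℝ, P * (P * X) = T * (A * (T * X)) := fun X => by
    rw [← Matrix.mul_assoc, hP2]; simp only [Matrix.mul_assoc]
  have ePinv : ∀ X : Matrix (Fin n) (Fin n) ℝ, P⁻¹ * (P * X) = X := fun X => by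
    rw [← Matrix.mul_assoc, Matrix.nonsing_inv_mul _ hPu, Matrix.one_mul]
  have ePPinv : ∀ X : Matrix (Fin n) (Fin n) ℝ, P * (P⁻¹ * X) = X := fun X => by
    rw [← Matrix.mul_assoc, Matrix.mul_nonsing_inv _ hPu, Matrix.one_mul]
  -- the orthogonal matrix W
  set W := S * T * P⁻¹ with hWdef
  have hWt : Wᵀ = P⁻¹ * (T * S) := by
    simp only [hWdef, Matrix.transpose_mul, hPinvT, hSt, hTt, Matrix.mul_assoc]
  have hWtW : Wᵀ * W = 1 := by
    rw [hWt, hWdef]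
    simp only [Matrix.mul_assoc]
    rw [e1, ← e3, ePinv, Matrix.mul_nonsing_inv _ hPu]
  -- C = W * P * Wᵀ
  have hWPW : W * P * Wᵀ = C := by
    refine Matrix.PosSemidef.eq_sqrt_of_sq_eq ?_ hSBS ?_
    · have h := hP.mul_mul_conjTranspose_same W
      rwa [Matrix.conjTranspose_eq_transpose_of_trivial] at h
    · have hsq : (W * P * Wᵀ) ^ 2 = W * (P * ((Wᵀ * W) * (P * Wᵀ))) := by
        rw [pow_two]; simp only [Matrix.mul_assoc]
      rw [hsq, hWtW, Matrix.one_mul, hWt, hWdef]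
      simp only [Matrix.mul_assoc]
      rw [ePPinv, ePinv, e2]
  have hTrPC : C.trace = P.trace := by
    rw [← hWPW, Matrix.trace_mul_comm (W * P) Wᵀ, ← Matrix.mul_assoc, hWtW, Matrix.one_mul]
  clear_value S T C P W
  -- feasibility characterization
  have hone : (1 : Matrix (Fin n) (Fin n) ℝ).PosDef := Matrix.PosDef.one
  haveI : Invertible (1 : Matrix (Fin n) (Fin n) ℝ) := invertibleOne
  have hfeq : ∀ U : Matrix (Fin n) (Fin n) ℝ,
      (Matrix.fromBlocks B Uᵀ U 1).PosSemidef ↔ (B - Uᵀ * U).PosSemidef := by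
    intro U
    have h1 : (Matrix.fromBlocks B Uᵀ U (1 : Matrix (Fin n) (Fin n) ℝ))
        = Matrix.fromBlocks B Uᵀ (Uᵀ)ᴴ 1 := by
      rw [Matrix.conjTranspose_eq_transpose_of_trivial, Matrix.transpose_transpose]
    have hinv1 : (1 : Matrix (Fin n) (Fin n) ℝ)⁻¹ = 1 := Matrix.inv_eq_left_inv (by simp)
    rw [h1, Matrix.PosDef.fromBlocks₂₂ B Uᵀ hone, hinv1, Matrix.mul_one,
      Matrix.conjTranspose_eq_transpose_of_trivial, Matrix.transpose_transpose]
  constructor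
  · -- existence of the maximizer U₀ = W * T
    refine ⟨W * T, ?_, ?_⟩
    · rw [hfeq]
      have hU0 : (W * T)ᵀ * (W * T) = B := by
        rw [Matrix.transpose_mul, hTt, Matrix.mul_assoc, ← Matrix.mul_assoc Wᵀ W T, hWtW,
          Matrix.one_mul, hT2]
      rw [hU0, sub_self]
      exact Matrix.PosSemidef.zero
    · rw [hmA, hmC]
      have hval : S * (W * T) = A * T * P⁻¹ * T := by
        rw [hWdef]; simp only [Matrix.mul_assoc]; rw [e1]
      rw [hval]
      have h5 : (A * T * P⁻¹ * T).trace = ((T * A * T) * P⁻¹).trace := by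
        rw [Matrix.trace_mul_comm]
        simp only [Matrix.mul_assoc]
      rw [h5, ← hP2, Matrix.mul_nonsing_inv_cancel_right _ _ hPu, hTrPC]
  · -- the upper bound
    intro U hU
    rw [hmA, hmC]
    have hfe : (B - Uᵀ * U).PosSemidef := (hfeq U).mp hU
    -- the dual certificate Q = S * C⁻¹ * S
    set Q := S * C⁻¹ * S with hQdef
    have hCinvd : C⁻¹.PosDef := hCd.inv
    have hCinvu : IsUnit C⁻¹.det := hCinvd.det_pos.ne'.isUnit
    have hQpsd : Q.PosSemidef := by
      have h := hCinvd.posSemidef.mul_mul_conjTranspose_same S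
      rwa [Matrix.conjTranspose_eq_transpose_of_trivial, hSt] at h
    have hQu : IsUnit Q.det := by
      have hdet : Q.det = S.det * C⁻¹.det * S.det := by
        rw [hQdef, Matrix.det_mul, Matrix.det_mul]
      rw [hdet]
      exact (hSu.mul hCinvu).mul hSu
    set R := hQpsd.sqrt with hRdef
    have hR : R.PosSemidef := hQpsd.posSemidef_sqrt
    have hR2 : R * R = Q := hQpsd.sqrt_mul_self
    have hRt : Rᵀ = R := by
      rw [← Matrix.conjTranspose_eq_transpose_of_trivial]; exact hR.1
    have hRu : IsUnit R.det := by
      have hdet : R.det * R.det = Q.det := by rw [← Matrix.det_mul, hR2]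
      refine isUnit_of_mul_isUnit_left (y := R.det) ?_
      rw [hdet]; exact hQu
    have hRinvT : (R⁻¹)ᵀ = R⁻¹ := by rw [Matrix.transpose_nonsing_inv, hRt]
    clear_value Q R
    -- key positivity
    have hXpsd := Matrix.posSemidef_conjTranspose_mul_self (U * R - S * R⁻¹)
    have hkey : 0 ≤ ((U * R - S * R⁻¹)ᴴ * (U * R - S * R⁻¹)).trace := psd_trace_nonneg hXpsd
    have hexp : (U * R - S * R⁻¹)ᴴ * (U * R - S * R⁻¹)
        = R * (Uᵀ * (U * R)) - R * (Uᵀ * (S * R⁻¹)) - R⁻¹ * (S * (U * R))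
          + R⁻¹ * (S * (S * R⁻¹)) := by
      rw [Matrix.conjTranspose_eq_transpose_of_trivial, Matrix.transpose_sub,
        Matrix.transpose_mul, Matrix.transpose_mul, hRt, hRinvT, hSt]
      rw [Matrix.sub_mul, Matrix.mul_sub, Matrix.mul_sub]
      simp only [Matrix.mul_assoc]
      abel
    rw [hexp] at hkey
    rw [Matrix.trace_add, Matrix.trace_sub, Matrix.trace_sub] at hkey
    have t1 : (R * (Uᵀ * (U * R))).trace = ((Uᵀ * U) * Q).trace := by
      rw [Matrix.trace_mul_comm, ← hR2]
      simp only [Matrix.mul_assoc]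
    have t2 : (R * (Uᵀ * (S * R⁻¹))).trace = (S * U).trace := by
      rw [Matrix.trace_mul_comm]
      have h6 : Uᵀ * (S * R⁻¹) * R = Uᵀ * S := by
        simp only [Matrix.mul_assoc]
        rw [Matrix.nonsing_inv_mul _ hRu, Matrix.mul_one]
      rw [h6]
      have h7 : (S * U)ᵀ = Uᵀ * S := by rw [Matrix.transpose_mul, hSt]
      rw [← h7, Matrix.trace_transpose]
    have t3 : (R⁻¹ * (S * (U * R))).trace = (S * U).trace := by
      rw [Matrix.trace_mul_comm]
      have h6 : S * (U * R) * R⁻¹ = S * U := by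
        simp only [Matrix.mul_assoc]
        rw [Matrix.mul_nonsing_inv _ hRu, Matrix.mul_one]
      rw [h6]
    have t4 : (R⁻¹ * (S * (S * R⁻¹))).trace = (A * Q⁻¹).trace := by
      have h6 : Q⁻¹ = R⁻¹ * R⁻¹ := by rw [← hR2, Matrix.mul_inv_rev]
      rw [Matrix.trace_mul_comm, h6]
      simp only [Matrix.mul_assoc, e1]
    -- bound Tr(UᵀU Q) by Tr(B Q)
    have hBQ : ((Uᵀ * U) * Q).trace ≤ (B * Q).trace := by
      have h := psd_trace_mul_nonneg hfe hQpsd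
      rw [Matrix.sub_mul, Matrix.trace_sub] at h
      linarith
    -- Tr(B Q) = Tr C
    have hBQC : (B * Q).trace = C.trace := by
      have h8 : B * Q = B * S * C⁻¹ * S := by
        rw [hQdef]; simp only [Matrix.mul_assoc]
      rw [h8, Matrix.trace_mul_comm]
      have h9 : S * (B * S * C⁻¹) = (C * C) * C⁻¹ := by
        rw [hC2]; simp only [Matrix.mul_assoc]
      rw [h9, Matrix.mul_nonsing_inv_cancel_right _ _ hCu]
    -- Tr(A Q⁻¹) = Tr C
    have hAQC : (A * Q⁻¹).trace = C.trace := by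
      have hQinv : Q⁻¹ = S⁻¹ * (C * S⁻¹) := by
        rw [hQdef, Matrix.mul_inv_rev, Matrix.mul_inv_rev,
          Matrix.nonsing_inv_nonsing_inv _ hCu]
      have eSSinv : ∀ X : Matrix (Fin n) (Fin n) ℝ, S * (S⁻¹ * X) = X := fun X => by
        rw [← Matrix.mul_assoc, Matrix.mul_nonsing_inv _ hSu, Matrix.one_mul]
      have h10 : A * Q⁻¹ = S * (C * S⁻¹) := by
        rw [hQinv, ← hS2]
        simp only [Matrix.mul_assoc, eSSinv]
      rw [h10, Matrix.trace_mul_comm, Matrix.mul_assoc, Matrix.nonsing_inv_mul _ hSu,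
        Matrix.mul_one]
    linarith [hkey, t1, t2, t3, t4, hBQ, hBQC, hAQC]
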